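/- (Expansion theorem) Let Q̂ be a linear operator on F[x] that lowers the degree of every polynomial by one. Then every linear operator T̂: F[x] → F[x] admits a unique expansion T̂ = ∑_{n≥0} q_n(x̂) Q̂^n, where each q_n is a polynomial, x̂ is multiplication by x, and the sum is locally finite (on each polynomial only finitely many terms are nonzero). -/

import Mathlib

open Polynomial

noncomputable def expCoef {F : Type*} [Field F]
    (Qh T : Polynomial F →ₗ[F] Polynomial F) : ℕ → Polynomial F
  | n => (T (X ^ n) - ∑ k ∈ (Finset.range n).attach,
      expCoef Qh T k * (Qh ^ (k : ℕ)) (X ^ n)) * C ((((Qh ^ n) (X ^ n)).coeff 0)⁻¹)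
  decreasing_by exact Finset.mem_range.mp k.2

/-- Expansion theorem: if Q̂ lowers the degree of every polynomial by
one, then every linear operator T̂ on F[x] has a unique locally finite expansion
T̂ = ∑_{n≥0} q_n(x̂) Q̂^n with polynomial coefficients q_n. -/
theorem expansion_theorem
    (F : Type*) [Field F] [CharZero F]
    (Qh : Polynomial F →ₗ[F] Polynomial F)
    (hQc : ∀ c : F, Qh (C c) = 0)
    (hQdeg : ∀ p : Polynomial F, 1 ≤ p.natDegree →
      Qh p ≠ 0 ∧ (Qh p).natDegree = p.natDegree - 1) :
    ∀ T : Polynomial F →ₗ[F] Polynomial F,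
      ∃! q : ℕ → Polynomial F,
        ∀ p : Polynomial F,
          T p = ∑ n ∈ Finset.range (p.natDegree + 1), q n * (Qh ^ n) p := by
  -- key degree lemma
  have qdeg : ∀ n (p : Polynomial F), p ≠ 0 → n ≤ p.natDegree →
      (Qh ^ n) p ≠ 0 ∧ ((Qh ^ n) p).natDegree = p.natDegree - n := by
    intro n
    induction n with
    | zero => intro p hp _; simpa using hp
    | succ n ih =>
      intro p hp hn
      have h1 : 1 ≤ p.natDegree := le_trans (by omega) hn
      obtain ⟨hne, hdeg⟩ := hQdeg p h1
      have hn' : n ≤ (Qh p).natDegree := by omega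
      obtain ⟨h1', h2'⟩ := ih (Qh p) hne hn'
      have heq : (Qh ^ (n+1)) p = (Qh ^ n) (Qh p) := by
        rw [pow_succ, Module.End.mul_apply]
      rw [heq]
      exact ⟨h1', by rw [h2', hdeg]; omega⟩
  -- vanishing lemma
  have qzero : ∀ (p : Polynomial F) n, p.natDegree < n → (Qh ^ n) p = 0 := by
    intro p n hn
    by_cases hp : p = 0
    · simp [hp]
    · set d := p.natDegree with hd
      have hstep : (Qh ^ (d + 1)) p = 0 := by
        have h0 : ((Qh ^ d) p).natDegree = 0 := by
          have := (qdeg d p hp le_rfl).2; omega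
        have := Polynomial.eq_C_of_natDegree_eq_zero h0
        rw [pow_succ', Module.End.mul_apply, this, hQc]
      obtain ⟨k, hk⟩ := Nat.exists_eq_add_of_le (by omega : d + 1 ≤ n)
      rw [hk, add_comm, pow_add, Module.End.mul_apply, hstep, map_zero]
  -- the leading constants
  have hCn : ∀ n : ℕ, ∃ c : F, c ≠ 0 ∧ (Qh ^ n) (X ^ n : Polynomial F) = C c := by
    intro n
    have hX : (X ^ n : Polynomial F) ≠ 0 := pow_ne_zero _ X_ne_zero
    have hdX : (X ^ n : Polynomial F).natDegree = n := natDegree_X_pow n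
    obtain ⟨h1, h2⟩ := qdeg n (X ^ n) hX (by omega)
    have h0 : ((Qh ^ n) (X ^ n : Polynomial F)).natDegree = 0 := by omega
    have hc := Polynomial.eq_C_of_natDegree_eq_zero h0
    refine ⟨_, fun h => h1 ?_, hc⟩
    rw [hc, h, map_zero]
  intro T
  set q : ℕ → Polynomial F := expCoef Qh T with hq
  -- the defining property of q on monomials
  have hmono : ∀ n : ℕ, T (X ^ n) = ∑ k ∈ Finset.range (n + 1), q k * (Qh ^ k) (X ^ n) := by
    intro n
    have hqn : q n = (T (X ^ n) - ∑ k ∈ Finset.range n, q k * (Qh ^ k) (X ^ n))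
        * C ((((Qh ^ n) (X ^ n)).coeff 0)⁻¹) := by
      rw [hq, expCoef, Finset.sum_attach (Finset.range n)
        (fun k => expCoef Qh T k * (Qh ^ k) (X ^ n))]
    obtain ⟨c, hC2, hC1⟩ := hCn n
    rw [hC1, coeff_C_zero] at hqn
    rw [Finset.sum_range_succ, hqn, hC1, mul_assoc, ← C_mul, inv_mul_cancel₀ hC2,
      C_1, mul_one]
    ring
  -- existence
  refine ⟨q, ?_, ?_⟩
  · intro p
    set N := p.natDegree with hN
    have hrep : p = ∑ m ∈ Finset.range (N + 1), p.coeff m • X ^ m := by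
      conv_lhs => rw [p.as_sum_range]
      simp [Polynomial.smul_X_eq_monomial]
      rfl
    calc T p = T (∑ m ∈ Finset.range (N + 1), p.coeff m • X ^ m) := by rw [← hrep]
      _ = ∑ m ∈ Finset.range (N + 1), p.coeff m • T (X ^ m) := by
          rw [map_sum]; simp [map_smul]
      _ = ∑ m ∈ Finset.range (N + 1), p.coeff m •
            ∑ n ∈ Finset.range (N + 1), q n * (Qh ^ n) (X ^ m) := by
          refine Finset.sum_congr rfl fun m hm => ?_
          rw [hmono m]
          congr 1
          refine Finset.sum_subset ?_ ?_
          · intro x hx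
            simp only [Finset.mem_range] at *
            omega
          · intro x hx hx'
            simp only [Finset.mem_range] at *
            have : (X ^ m : Polynomial F).natDegree < x := by
              rw [natDegree_X_pow]; omega
            rw [qzero _ _ this, mul_zero]
      _ = ∑ n ∈ Finset.range (N + 1), q n * (Qh ^ n) p := by
          conv_rhs => rw [hrep]
          simp_rw [Finset.smul_sum]
          rw [Finset.sum_comm]
          refine Finset.sum_congr rfl fun n _ => ?_
          rw [map_sum, Finset.mul_sum]
          refine Finset.sum_congr rfl fun m _ => ?_
          rw [map_smul, mul_smul_comm]
  -- uniqueness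
  · intro q' hq'
    funext n
    induction n using Nat.strong_induction_on with
    | _ n ih =>
      have h1 := hq' (X ^ n)
      have h2 := hmono n
      rw [natDegree_X_pow] at h1
      rw [h1] at h2
      rw [Finset.sum_range_succ, Finset.sum_range_succ] at h2
      have heq : ∑ k ∈ Finset.range n, q' k * (Qh ^ k) (X ^ n)
          = ∑ k ∈ Finset.range n, q k * (Qh ^ k) (X ^ n) := by
        refine Finset.sum_congr rfl fun k hk => ?_
        rw [ih k (Finset.mem_range.mp hk)]
      rw [heq] at h2
      have h3 : q' n * (Qh ^ n) (X ^ n) = q n * (Qh ^ n) (X ^ n) := by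
        have := add_left_cancel h2
        exact this
      obtain ⟨c, hC2, hC1⟩ := hCn n
      have hne : (Qh ^ n) (X ^ n : Polynomial F) ≠ 0 := by
        rw [hC1]; simpa using hC2
      exact mul_right_cancel₀ hne h3
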